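/- Multivariate from univariate decompositions: if each element has a finite expansion X^(j) = Σ_{m=1}^{M_j} ξ_m^(j) φ_m^(j) in orthonormal univariate eigenfunctions, then the positive eigenvalues of the multivariate covariance operator Γ equal the positive eigenvalues of the symmetric block matrix Z ∈ ℝ^{M₊×M₊} (M₊ = Σ_j M_j) with entries Z_{mn}^{(jk)} = Cov(ξ_m^(j), ξ_n^(k)); the corresponding eigenfunctions of Γ have elements ψ_m^(j) = Σ_{n=1}^{M_j} [c_m]_n^(j) φ_n^(j), where c_m are orthonormal eigenvectors of Z, these ψ_m are orthonormal in H, and the multivariate scores are ρ_m = Σ_j Σ_n [c_m]_n^(j) ξ_n^(j). -/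

import Mathlib

open MeasureTheory Matrix
open scoped ENNReal

section aux
variable {α : Type*} [MeasurableSpace α] {μ : Measure α}

lemma aux_int_mul {f g : α → ℝ} (hf : MemLp f 2 μ) (hg : MemLp g 2 μ) :
    Integrable (fun t => f t * g t) μ := by
  have h : (1 : ℝ≥0∞)/1 = 1/2 + 1/2 := by rw [ENNReal.div_add_div_same, one_div_one, one_add_one_eq_two, ENNReal.div_self two_ne_zero ENNReal.ofNat_ne_top]
  have := hg.smul (φ := f) (p := 2) (r := 1) hf
  simp only [memLp_one_iff_integrable, smul_eq_mul] at this
  exact this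

lemma aux_expand {M : ℕ} (φ : Fin M → α → ℝ) (hφ2 : ∀ m, MemLp (φ m) 2 μ)
    {g : α → ℝ} (hg : MemLp g 2 μ) (a : Fin M → ℝ) :
    ∫ t, (∑ n, a n * φ n t) * g t ∂μ = ∑ n, a n * ∫ t, φ n t * g t ∂μ := by
  have h1 : ∀ t, (∑ n, a n * φ n t) * g t = ∑ n, a n * (φ n t * g t) := by
    intro t; rw [Finset.sum_mul]; exact Finset.sum_congr rfl fun n _ => by ring
  simp_rw [h1]
  rw [integral_finset_sum _ fun n _ => (aux_int_mul (hφ2 n) hg).const_mul (a n)]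
  simp_rw [integral_const_mul]

lemma aux_coeff {M : ℕ} (φ : Fin M → α → ℝ) (hφ2 : ∀ m, MemLp (φ m) 2 μ)
    (hφorth : ∀ m n, ∫ t, φ m t * φ n t ∂μ = if m = n then 1 else 0)
    (b : Fin M → ℝ) (n : Fin M) :
    ∫ t, φ n t * (∑ m, b m * φ m t) ∂μ = b n := by
  have h1 : ∀ t, φ n t * (∑ m, b m * φ m t) = (∑ m, b m * φ m t) * φ n t :=
    fun t => mul_comm _ _
  simp_rw [h1]
  rw [aux_expand φ hφ2 (hφ2 n) b]
  simp [hφorth]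

lemma aux_orth {M : ℕ} (φ : Fin M → α → ℝ) (hφ2 : ∀ m, MemLp (φ m) 2 μ)
    (hφorth : ∀ m n, ∫ t, φ m t * φ n t ∂μ = if m = n then 1 else 0)
    (a b : Fin M → ℝ) :
    ∫ t, (∑ n, a n * φ n t) * (∑ n, b n * φ n t) ∂μ = ∑ n, a n * b n := by
  have hg : MemLp (fun t => ∑ n, b n * φ n t) 2 μ :=
    memLp_finset_sum _ fun n _ => (hφ2 n).const_mul (b n)
  rw [aux_expand φ hφ2 hg a]
  exact Finset.sum_congr rfl fun n _ => by rw [aux_coeff φ hφ2 hφorth b n]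

end aux

/-- Multivariate FPCA from finite univariate Karhunen–Loève expansions
`X⁽ʲ⁾ = ∑_{m<M_j} ξ_m⁽ʲ⁾ φ_m⁽ʲ⁾` with orthonormal `φ_m⁽ʲ⁾`: with the block score
covariance matrix `Z` (`Z_{mn}^{(jk)} = Cov(ξ_m⁽ʲ⁾, ξ_n⁽ᵏ⁾)`),
(1) `ν > 0` is an eigenvalue of the multivariate covariance operator `Γ` iff it is
an eigenvalue of `Z`;
(2) for an eigenvector `c` of `Z` with eigenvalue `ν > 0`, the function with
elements `ψ⁽ʲ⁾ = ∑_n [c]_n⁽ʲ⁾ φ_n⁽ʲ⁾` satisfies the eigen-equation of `Γ`;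
(3) `⟪ψ_c, ψ_{c'}⟫ = cᵀc'`, so orthonormal eigenvectors yield orthonormal
eigenfunctions; and
(4) the multivariate scores are `ρ = ⟪X, ψ_c⟫ = ∑_j ∑_n [c]_n⁽ʲ⁾ ξ_n⁽ʲ⁾`. -/
theorem multivariate_from_univariate_KL
    (p : ℕ) (T : Fin p → Type*) [∀ j, MeasurableSpace (T j)]
    (μ : ∀ j, Measure (T j))
    (Ω : Type*) [MeasureSpace Ω] [IsProbabilityMeasure (volume : Measure Ω)]
    (Mdim : Fin p → ℕ)
    (φ : ∀ j, Fin (Mdim j) → T j → ℝ)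
    (ξ : ∀ j, Fin (Mdim j) → Ω → ℝ)
    (X : ∀ j, Ω → T j → ℝ)
    (hX : ∀ j ω (t : T j), X j ω t = ∑ m, ξ j m ω * φ j m t)
    (hφ2 : ∀ j m, MemLp (φ j m) 2 (μ j))
    (hφorth : ∀ j m n, ∫ t, φ j m t * φ j n t ∂ μ j = if m = n then 1 else 0)
    (hξ2 : ∀ j m, MemLp (ξ j m) 2 (volume : Measure Ω))
    (hξmean : ∀ j m, ∫ ω, ξ j m ω = 0)
    (C : ∀ j k, T j → T k → ℝ)
    (hC : ∀ j k (s : T j) (t : T k),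
      C j k s t = ∑ l, ∑ n, (∫ ω, ξ j l ω * ξ k n ω) * φ j l s * φ k n t)
    (Z : Matrix ((j : Fin p) × Fin (Mdim j)) ((j : Fin p) × Fin (Mdim j)) ℝ)
    (hZ : ∀ i i', Z i i' = ∫ ω, ξ i.1 i.2 ω * ξ i'.1 i'.2 ω) :
    -- (1) positive eigenvalues of `Γ` are exactly positive eigenvalues of `Z`
    (∀ ν : ℝ, 0 < ν →
      ((∃ ψ : ∀ j, T j → ℝ, (∀ j, MemLp (ψ j) 2 (μ j)) ∧
          (∑ j, ∫ t, (ψ j t) ^ 2 ∂ μ j) ≠ 0 ∧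
          ∀ j (t : T j), ∑ k, ∫ s, C k j s t * ψ k s ∂ μ k = ν * ψ j t) ↔
        (∃ c : (j : Fin p) × Fin (Mdim j) → ℝ, c ≠ 0 ∧ Z.mulVec c = ν • c))) ∧
    -- (2) assembled eigenfunctions satisfy the eigen-equation of `Γ`
    (∀ (ν : ℝ) (c : (j : Fin p) × Fin (Mdim j) → ℝ), 0 < ν → Z.mulVec c = ν • c →
      ∀ j (t : T j),
        ∑ k, ∫ s, C k j s t * (∑ n, c ⟨k, n⟩ * φ k n s) ∂ μ k
          = ν * ∑ n, c ⟨j, n⟩ * φ j n t) ∧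
    -- (3) `⟪ψ_c, ψ_{c'}⟫ = cᵀ c'`: orthonormal eigenvectors give orthonormal eigenfunctions
    (∀ c c' : (j : Fin p) × Fin (Mdim j) → ℝ,
      ∑ j, ∫ t, (∑ n, c ⟨j, n⟩ * φ j n t) * (∑ n, c' ⟨j, n⟩ * φ j n t) ∂ μ j
        = ∑ i, c i * c' i) ∧
    -- (4) the multivariate scores `ρ = ⟪X, ψ_c⟫`
    (∀ (c : (j : Fin p) × Fin (Mdim j) → ℝ) (ω : Ω),
      ∑ j, ∫ t, X j ω t * (∑ n, c ⟨j, n⟩ * φ j n t) ∂ μ j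
        = ∑ i : (j : Fin p) × Fin (Mdim j), c i * ξ i.1 i.2 ω) := by
  have hsigma : ∀ (f : ((j : Fin p) × Fin (Mdim j)) → ℝ),
      ∑ i, f i = ∑ j, ∑ n, f ⟨j, n⟩ := by
    intro f; rw [← Finset.univ_sigma_univ, Finset.sum_sigma]
  have hZsymm : ∀ i i', Z i i' = Z i' i := by
    intro i i'; rw [hZ, hZ]; congr 1; funext ω; ring
  have hmv : ∀ (c : ((j : Fin p) × Fin (Mdim j)) → ℝ) i,
      Z.mulVec c i = ∑ i', Z i i' * c i' := by
    intro c i; simp [Matrix.mulVec, dotProduct]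
  -- main integral expansion
  have hint : ∀ (k : Fin p) (g : T k → ℝ), MemLp g 2 (μ k) → ∀ (j : Fin p) (t : T j),
      ∫ s, C k j s t * g s ∂ μ k
        = ∑ n, (∑ l, Z ⟨k, l⟩ ⟨j, n⟩ * ∫ s, φ k l s * g s ∂ μ k) * φ j n t := by
    intro k g hg j t
    have hrep : ∀ s, C k j s t = ∑ l, (∑ n, Z ⟨k, l⟩ ⟨j, n⟩ * φ j n t) * φ k l s := by
      intro s; rw [hC]
      refine Finset.sum_congr rfl fun l _ => ?_
      rw [Finset.sum_mul]
      refine Finset.sum_congr rfl fun n _ => ?_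
      rw [hZ]; ring
    simp_rw [hrep]
    rw [aux_expand (φ k) (hφ2 k) hg]
    simp_rw [Finset.sum_mul]
    rw [Finset.sum_comm]
    exact Finset.sum_congr rfl fun n _ => Finset.sum_congr rfl fun l _ => by ring
  have hco : ∀ (k : Fin p) (c : ((j : Fin p) × Fin (Mdim j)) → ℝ) (l : Fin (Mdim k)),
      ∫ s, φ k l s * (∑ n, c ⟨k, n⟩ * φ k n s) ∂ μ k = c ⟨k, l⟩ :=
    fun k c l => aux_coeff (φ k) (hφ2 k) (hφorth k) _ l
  -- part (2)
  have part2 : ∀ (ν : ℝ) (c : ((j : Fin p) × Fin (Mdim j)) → ℝ), 0 < ν → Z.mulVec c = ν • c →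
      ∀ j (t : T j),
        ∑ k, ∫ s, C k j s t * (∑ n, c ⟨k, n⟩ * φ k n s) ∂ μ k
          = ν * ∑ n, c ⟨j, n⟩ * φ j n t := by
    intro ν c hν hc j t
    have hmem : ∀ k, MemLp (fun s => ∑ n, c ⟨k, n⟩ * φ k n s) 2 (μ k) :=
      fun k => memLp_finset_sum _ fun n _ => (hφ2 k n).const_mul _
    have h1 : ∀ k, ∫ s, C k j s t * (∑ n, c ⟨k, n⟩ * φ k n s) ∂ μ k
        = ∑ n, (∑ l, Z ⟨k, l⟩ ⟨j, n⟩ * c ⟨k, l⟩) * φ j n t := by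
      intro k
      rw [hint k _ (hmem k) j t]
      refine Finset.sum_congr rfl fun n _ => ?_
      congr 1
      exact Finset.sum_congr rfl fun l _ => by rw [hco]
    simp_rw [h1]
    rw [Finset.sum_comm, Finset.mul_sum]
    refine Finset.sum_congr rfl fun n _ => ?_
    rw [← Finset.sum_mul]
    have h2 : ∑ k, (∑ l, Z ⟨k, l⟩ ⟨j, n⟩ * c ⟨k, l⟩) = (Z.mulVec c) ⟨j, n⟩ := by
      rw [hmv, hsigma (fun i => Z ⟨j, n⟩ i * c i)]
      exact Finset.sum_congr rfl fun k _ => Finset.sum_congr rfl fun l _ => by rw [hZsymm]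
    rw [h2, hc, Pi.smul_apply, smul_eq_mul, mul_assoc]
  -- part (3)
  have part3 : ∀ c c' : ((j : Fin p) × Fin (Mdim j)) → ℝ,
      ∑ j, ∫ t, (∑ n, c ⟨j, n⟩ * φ j n t) * (∑ n, c' ⟨j, n⟩ * φ j n t) ∂ μ j
        = ∑ i, c i * c' i := by
    intro c c'
    rw [hsigma (fun i => c i * c' i)]
    exact Finset.sum_congr rfl fun j _ => aux_orth (φ j) (hφ2 j) (hφorth j) _ _
  refine ⟨?_, part2, part3, ?_⟩
  · -- part (1)
    intro ν hν
    constructor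
    · rintro ⟨ψ, hψ2, hne, heig⟩
      set c : ((j : Fin p) × Fin (Mdim j)) → ℝ :=
        fun i => ∫ t, φ i.1 i.2 t * ψ i.1 t ∂ μ i.1 with hcdef
      have hexp : ∀ j (t : T j), ν * ψ j t = ∑ n, (Z.mulVec c) ⟨j, n⟩ * φ j n t := by
        intro j t
        rw [← heig j t]
        have h1 : ∀ k, ∫ s, C k j s t * ψ k s ∂ μ k
            = ∑ n, (∑ l, Z ⟨k, l⟩ ⟨j, n⟩ * c ⟨k, l⟩) * φ j n t :=
          fun k => hint k (ψ k) (hψ2 k) j t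
        simp_rw [h1]
        rw [Finset.sum_comm]
        refine Finset.sum_congr rfl fun n _ => ?_
        rw [← Finset.sum_mul]
        congr 1
        rw [hmv, hsigma (fun i => Z ⟨j, n⟩ i * c i)]
        exact Finset.sum_congr rfl fun k _ => Finset.sum_congr rfl fun l _ => by
          rw [hZsymm]
      have hmvc : Z.mulVec c = ν • c := by
        funext i
        obtain ⟨j, m⟩ := i
        have h3 := aux_coeff (φ j) (hφ2 j) (hφorth j) (fun n => (Z.mulVec c) ⟨j, n⟩) m
        have h4 : ∀ t, φ j m t * (∑ n, (Z.mulVec c) ⟨j, n⟩ * φ j n t)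
            = ν * (φ j m t * ψ j t) := by
          intro t; rw [← hexp j t]; ring
        have h5 : (Z.mulVec c) ⟨j, m⟩ = ν * c ⟨j, m⟩ := by
          rw [← h3]
          simp_rw [h4]
          rw [integral_const_mul]
        rw [h5, Pi.smul_apply, smul_eq_mul]
      refine ⟨c, ?_, hmvc⟩
      intro hc0
      apply hne
      have hψ0 : ∀ j (t : T j), ψ j t = 0 := by
        intro j t
        have h := hexp j t
        rw [hc0, Matrix.mulVec_zero] at h
        simp only [Pi.zero_apply, zero_mul, Finset.sum_const_zero] at h
        rcases mul_eq_zero.mp h with h' | h'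
        · exact absurd h' hν.ne'
        · exact h'
      simp only [hψ0]
      simp
    · rintro ⟨c, hc0, hcv⟩
      refine ⟨fun j => fun t => ∑ n, c ⟨j, n⟩ * φ j n t,
        fun j => memLp_finset_sum _ fun n _ => (hφ2 j n).const_mul _, ?_,
        part2 ν c hν hcv⟩
      have h5 : ∑ j, ∫ t, (∑ n, c ⟨j, n⟩ * φ j n t) ^ 2 ∂ μ j = ∑ i, c i * c i := by
        simp_rw [sq]
        exact part3 c c
      rw [h5]
      intro h
      apply hc0
      funext i
      have h6 := (Finset.sum_eq_zero_iff_of_nonneg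
        (fun i _ => mul_self_nonneg (c i))).mp h i (Finset.mem_univ i)
      exact mul_self_eq_zero.mp h6
  · -- part (4)
    intro c ω
    rw [hsigma (fun i => c i * ξ i.1 i.2 ω)]
    refine Finset.sum_congr rfl fun j _ => ?_
    have h1 : ∀ t, X j ω t = ∑ m, ξ j m ω * φ j m t := hX j ω
    simp_rw [h1]
    rw [aux_orth (φ j) (hφ2 j) (hφorth j) (fun m => ξ j m ω) (fun n => c ⟨j, n⟩)]
    exact Finset.sum_congr rfl fun n _ => mul_comm _ _
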